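/- arXiv:1704.04295 — 6 statements merged into one kernel-verified Lean document; each statement's English description precedes it below -/
import Mathlib

section
/- In diffusion on an n-vertex graph, the potential P(t) = Σ_v w_v(t)·w_v(t+1) satisfies P(t) ≥ -n(n-1)²/4 for all t ≥ 0. -/
open Finset Classical

/-- One step of the diffusion process: each vertex gains one chip from each
neighbour with a strictly larger label and loses one chip to each neighbour
with a strictly smaller label. -/
noncomputable def diffStep {n : ℕ} (G : SimpleGraph (Fin n)) (w : Fin n → ℤ) : Fin n → ℤ :=
  fun v => w v + ((Finset.univ.filter fun u => G.Adj v u ∧ w v < w u).card : ℤ)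
             - ((Finset.univ.filter fun u => G.Adj v u ∧ w u < w v).card : ℤ)

/-- The labelling at time `t` of the diffusion process started from `w0`. -/
noncomputable def diff {n : ℕ} (G : SimpleGraph (Fin n)) (w0 : Fin n → ℤ) (t : ℕ) : Fin n → ℤ :=
  (diffStep G)^[t] w0

/-- The potential `P(t) = ∑_v w_v(t) · w_v(t+1)`. -/
noncomputable def pot {n : ℕ} (G : SimpleGraph (Fin n)) (w0 : Fin n → ℤ) (t : ℕ) : ℤ :=
  ∑ v, diff G w0 t v * diff G w0 (t + 1) v

/-- `x_{uv}(t) = sgn(w_u(t) - w_v(t))` for edges, `0` for non-edges. -/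
noncomputable def xlab {n : ℕ} (G : SimpleGraph (Fin n)) (w0 : Fin n → ℤ)
    (u v : Fin n) (t : ℕ) : ℤ :=
  if G.Adj u v then Int.sign (diff G w0 t u - diff G w0 t v) else 0

/-- `y_{uv}(t) = sgn(w_u(t+1) - w_v(t+1))` for edges, `0` for non-edges. -/
noncomputable def ylab {n : ℕ} (G : SimpleGraph (Fin n)) (w0 : Fin n → ℤ)
    (u v : Fin n) (t : ℕ) : ℤ :=
  if G.Adj u v then Int.sign (diff G w0 (t + 1) u - diff G w0 (t + 1) v) else 0

/-- The label `(x_{uv}(t), y_{uv}(t))` of the edge `uv` at time `t`. -/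
noncomputable def elabel {n : ℕ} (G : SimpleGraph (Fin n)) (w0 : Fin n → ℤ)
    (u v : Fin n) (t : ℕ) : ℤ × ℤ :=
  (xlab G w0 u v t, ylab G w0 u v t)


lemma key_quad (a d c : ℚ) (h1 : -c ≤ d) (h2 : d ≤ c) : -(c^2)/4 ≤ a * (a + d) := by
  rcases le_or_gt 0 a with h | h
  · nlinarith [sq_nonneg (2*a - c), mul_nonneg h (by linarith : (0:ℚ) ≤ c + d)]
  · nlinarith [sq_nonneg (2*a + c), mul_nonneg (by linarith : (0:ℚ) ≤ -a) (by linarith : (0:ℚ) ≤ c - d)]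

lemma step_bound {n : ℕ} (G : SimpleGraph (Fin n)) (w : Fin n → ℤ) (v : Fin n) :
    |diffStep G w v - w v| ≤ (n : ℤ) - 1 := by
  have hn : 1 ≤ n := v.pos
  have hcard : (Finset.univ.erase v).card = n - 1 := by
    simp [Finset.card_erase_of_mem]
  have hA : ((Finset.univ.filter fun u => G.Adj v u ∧ w v < w u).card : ℤ) ≤ (n : ℤ) - 1 := by
    have hsub : (Finset.univ.filter fun u => G.Adj v u ∧ w v < w u) ⊆ Finset.univ.erase v := by
      intro u hu
      simp only [Finset.mem_filter] at hu
      exact Finset.mem_erase.2 ⟨hu.2.1.ne', Finset.mem_univ u⟩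
    have h := Finset.card_le_card hsub
    rw [hcard] at h
    omega
  have hB : ((Finset.univ.filter fun u => G.Adj v u ∧ w u < w v).card : ℤ) ≤ (n : ℤ) - 1 := by
    have hsub : (Finset.univ.filter fun u => G.Adj v u ∧ w u < w v) ⊆ Finset.univ.erase v := by
      intro u hu
      simp only [Finset.mem_filter] at hu
      exact Finset.mem_erase.2 ⟨hu.2.1.ne', Finset.mem_univ u⟩
    have h := Finset.card_le_card hsub
    rw [hcard] at h
    omega
  have hA0 : (0 : ℤ) ≤ ((Finset.univ.filter fun u => G.Adj v u ∧ w v < w u).card : ℤ) :=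
    Int.natCast_nonneg _
  have hB0 : (0 : ℤ) ≤ ((Finset.univ.filter fun u => G.Adj v u ∧ w u < w v).card : ℤ) :=
    Int.natCast_nonneg _
  rw [abs_le]
  constructor <;> · simp only [diffStep]; omega

theorem stmt2 {n : ℕ} (G : SimpleGraph (Fin n)) (w0 : Fin n → ℤ) (t : ℕ) :
    -((n : ℚ) * ((n : ℚ) - 1) ^ 2) / 4 ≤ (pot G w0 t : ℚ) := by
  set a := diff G w0 t with ha
  have hb : diff G w0 (t + 1) = diffStep G a := by
    rw [ha, diff, diff, Function.iterate_succ_apply']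
  have hpot : (pot G w0 t : ℚ) = ∑ v, (a v : ℚ) * ((diffStep G a v : ℚ)) := by
    rw [pot, hb]
    push_cast
    rfl
  rw [hpot]
  have hle : ∀ v ∈ Finset.univ, -(((n:ℚ)-1)^2)/4 ≤ (a v : ℚ) * (diffStep G a v : ℚ) := by
    intro v _
    have hd := step_bound G a v
    rw [abs_le] at hd
    have h1 : -((n:ℚ)-1) ≤ (diffStep G a v : ℚ) - (a v : ℚ) := by
      exact_mod_cast hd.1
    have h2 : (diffStep G a v : ℚ) - (a v : ℚ) ≤ (n:ℚ)-1 := by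
      exact_mod_cast hd.2
    have hk := key_quad (a v : ℚ) ((diffStep G a v : ℚ) - (a v : ℚ)) ((n:ℚ)-1) h1 h2
    have he : (a v : ℚ) * ((a v : ℚ) + ((diffStep G a v : ℚ) - (a v : ℚ)))
        = (a v : ℚ) * (diffStep G a v : ℚ) := by ring
    linarith [hk, he ▸ hk]
  calc -((n : ℚ) * ((n : ℚ) - 1) ^ 2) / 4
      = ∑ _v : Fin n, -(((n:ℚ)-1)^2)/4 := by
        rw [Finset.sum_const, Finset.card_univ, Fintype.card_fin, nsmul_eq_mul]
        ring
    _ ≤ ∑ v, (a v : ℚ) * (diffStep G a v : ℚ) := Finset.sum_le_sum hle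
end

section
/- In diffusion on a graph G, the potential difference satisfies P(t+1) - P(t) = Σ_{u<v} (x_{uv}(t) + y_{uv}(t))·(w_v(t+1) - w_u(t+1)), where the sum is over all pairs u < v, and x_{uv}, y_{uv} are the sign labels of edges (zero for non-edges). -/
open Finset Classical

lemma sign_sub_eq (a b : ℤ) :
    Int.sign (a - b) = (if b < a then (1:ℤ) else 0) - (if a < b then 1 else 0) := by
  rcases lt_trichotomy a b with h | h | h
  · rw [Int.sign_eq_neg_one_of_neg (by omega)]; split_ifs <;> omega
  · subst h; simp
  · rw [Int.sign_eq_one_of_pos (by omega)]; split_ifs <;> omega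

lemma step_eq {n : ℕ} (G : SimpleGraph (Fin n)) (w : Fin n → ℤ) (v : Fin n) :
    diffStep G w v = w v + ∑ u, (if G.Adj v u then Int.sign (w u - w v) else 0) := by
  unfold diffStep
  rw [Finset.card_filter, Finset.card_filter]
  push_cast
  rw [add_sub_assoc, ← Finset.sum_sub_distrib]
  congr 1
  apply Finset.sum_congr rfl
  intro u _
  by_cases h : G.Adj v u
  · simp [h, sign_sub_eq]
  · simp [h]

lemma diff_succ {n : ℕ} (G : SimpleGraph (Fin n)) (w0 : Fin n → ℤ) (t : ℕ) :
    diff G w0 (t + 1) = diffStep G (diff G w0 t) := by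
  simp [diff, Function.iterate_succ_apply']

lemma xlab_anti {n : ℕ} (G : SimpleGraph (Fin n)) (w0 : Fin n → ℤ) (u v : Fin n) (t : ℕ) :
    xlab G w0 v u t = - xlab G w0 u v t := by
  unfold xlab
  rw [G.adj_comm]
  split_ifs with h
  · rw [← Int.sign_neg, neg_sub]
  · ring

lemma ylab_anti {n : ℕ} (G : SimpleGraph (Fin n)) (w0 : Fin n → ℤ) (u v : Fin n) (t : ℕ) :
    ylab G w0 v u t = - ylab G w0 u v t := by
  unfold ylab
  rw [G.adj_comm]
  split_ifs with h
  · rw [← Int.sign_neg, neg_sub]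
  · ring

theorem stmt4 {n : ℕ} (G : SimpleGraph (Fin n)) (w0 : Fin n → ℤ) (t : ℕ) :
    pot G w0 (t + 1) - pot G w0 t =
      ∑ p ∈ Finset.univ.filter (fun p : Fin n × Fin n => p.1 < p.2),
        (xlab G w0 p.1 p.2 t + ylab G w0 p.1 p.2 t) *
          (diff G w0 (t + 1) p.2 - diff G w0 (t + 1) p.1) := by
  set w := diff G w0 t with hw
  set w1 := diff G w0 (t + 1) with hw1
  set w2 := diff G w0 (t + 2) with hw2
  have h1 : ∀ v, w1 v = w v + ∑ u, xlab G w0 u v t := by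
    intro v
    rw [hw1, diff_succ, step_eq]
    congr 1
    apply Finset.sum_congr rfl
    intro u _
    rw [xlab, G.adj_comm]
  have h2 : ∀ v, w2 v = w1 v + ∑ u, ylab G w0 u v t := by
    intro v
    rw [hw2, show t + 2 = (t+1) + 1 from rfl, diff_succ, step_eq]
    congr 1
    apply Finset.sum_congr rfl
    intro u _
    rw [ylab, G.adj_comm]
  have key : pot G w0 (t + 1) - pot G w0 t
      = ∑ v, w1 v * (∑ u, (xlab G w0 u v t + ylab G w0 u v t)) := by
    unfold pot
    rw [← Finset.sum_sub_distrib]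
    apply Finset.sum_congr rfl
    intro v _
    have e1 := h1 v
    have e2 := h2 v
    rw [Finset.sum_add_distrib]
    rw [show t + 1 + 1 = t + 2 from rfl]
    rw [← hw, ← hw1, ← hw2]
    have hx : ∑ u, xlab G w0 u v t = w1 v - w v := by omega
    have hy : ∑ u, ylab G w0 u v t = w2 v - w1 v := by omega
    rw [hx, hy]; ring
  rw [key]
  -- turn into a sum over the product
  have hprod : ∑ v, w1 v * (∑ u, (xlab G w0 u v t + ylab G w0 u v t))
      = ∑ p ∈ (Finset.univ ×ˢ Finset.univ : Finset (Fin n × Fin n)),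
          w1 p.2 * (xlab G w0 p.1 p.2 t + ylab G w0 p.1 p.2 t) := by
    rw [Finset.sum_product_right]
    apply Finset.sum_congr rfl
    intro v _
    rw [Finset.mul_sum]
  rw [hprod]
  set f : Fin n × Fin n → ℤ := fun p => w1 p.2 * (xlab G w0 p.1 p.2 t + ylab G w0 p.1 p.2 t)
    with hf
  have hsplit : ∑ p ∈ (Finset.univ ×ˢ Finset.univ : Finset (Fin n × Fin n)), f p
      = ∑ p ∈ Finset.univ.filter (fun p : Fin n × Fin n => p.1 < p.2), f p
        + ∑ p ∈ Finset.univ.filter (fun p : Fin n × Fin n => p.2 < p.1), f p := by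
    rw [show (Finset.univ ×ˢ Finset.univ : Finset (Fin n × Fin n)) = Finset.univ by
      ext p; simp]
    rw [← Finset.sum_filter_add_sum_filter_not Finset.univ
      (fun p : Fin n × Fin n => p.1 < p.2) f]
    congr 1
    symm
    apply Finset.sum_subset
    · intro p hp
      simp only [Finset.mem_filter, Finset.mem_univ, true_and] at hp ⊢
      exact not_lt.mpr hp.le
    · intro p hp hnp
      simp only [Finset.mem_filter, Finset.mem_univ, true_and, not_lt] at hp hnp
      have : p.1 = p.2 := le_antisymm hnp hp
      simp only [hf]
      have : xlab G w0 p.1 p.2 t = 0 := by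
        rw [xlab, this]; simp
      have h2 : ylab G w0 p.1 p.2 t = 0 := by
        rw [ylab, ‹p.1 = p.2›]; simp
      rw [this, h2]; ring
  rw [hsplit]
  have hswap : ∑ p ∈ Finset.univ.filter (fun p : Fin n × Fin n => p.2 < p.1), f p
      = ∑ p ∈ Finset.univ.filter (fun p : Fin n × Fin n => p.1 < p.2), f p.swap := by
    apply Finset.sum_nbij' (fun p => Prod.swap p) (fun p => Prod.swap p)
    · intro p hp; simp at hp ⊢; exact hp
    · intro p hp; simp at hp ⊢; exact hp
    · intro p _; simp
    · intro p _; simp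
    · intro p _; rfl
  rw [hswap, ← Finset.sum_add_distrib]
  apply Finset.sum_congr rfl
  intro p hp
  simp only [hf, Prod.fst_swap, Prod.snd_swap]
  rw [xlab_anti, ylab_anti]
  ring
end

section
/- In diffusion on a graph, suppose T is a time such that P(t) is constant for all t ≥ T (so no edge ever has label (1,1), (-1,-1), (0,1) or (0,-1) at any time t ≥ T). Then: (1) if an edge has label (1,0), (-1,0) or (0,0) at some time t ≥ T, it has label (0,0) at all times t' ≥ t+1; (2) if an edge has label (-1,1) at time t ≥ T, then at time t+1 it has label (1,-1) or (1,0); (3) if an edge has label (1,-1) at time t ≥ T, then at time t+1 it has label (-1,1) or (-1,0). -/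
open Finset Classical

/- ### Auxiliary lemmas -/

lemma aux_diff_succ {n : ℕ} (G : SimpleGraph (Fin n)) (w0 : Fin n → ℤ) (t : ℕ) (v : Fin n) :
    diff G w0 (t + 1) v = diff G w0 t v +
      ∑ u, (if G.Adj v u then Int.sign (diff G w0 t u - diff G w0 t v) else 0) := by
  have h : diff G w0 (t + 1) = diffStep G (diff G w0 t) := by
    simp [diff, Function.iterate_succ_apply']
  rw [h]
  show diff G w0 t v + _ - _ = _
  have hsum : ∑ u, (if G.Adj v u then Int.sign (diff G w0 t u - diff G w0 t v) else 0)
      = (∑ u, if G.Adj v u ∧ diff G w0 t v < diff G w0 t u then (1:ℤ) else 0)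
        - (∑ u, if G.Adj v u ∧ diff G w0 t u < diff G w0 t v then (1:ℤ) else 0) := by
    rw [← Finset.sum_sub_distrib]
    refine Finset.sum_congr rfl fun u _ => ?_
    by_cases ha : G.Adj v u
    · rcases lt_trichotomy (diff G w0 t u) (diff G w0 t v) with h1 | h1 | h1
      · have hs : (diff G w0 t u - diff G w0 t v).sign = -1 :=
          Int.sign_eq_neg_one_iff_neg.2 (by omega)
        simp [ha, h1, not_lt.2 h1.le, hs]
      · simp [ha, h1]
      · have hs : (diff G w0 t u - diff G w0 t v).sign = 1 :=
          Int.sign_eq_one_iff_pos.2 (by omega)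
        simp [ha, h1, not_lt.2 h1.le, hs]
    · simp [ha]
  rw [hsum, Finset.sum_boole, Finset.sum_boole]
  ring

lemma aux_sum_pairs {α : Type*} [Fintype α] [LinearOrder α]
    (f : α → α → ℤ) (hdiag : ∀ a, f a a = 0) :
    ∑ v, ∑ u, f v u
      = ∑ p ∈ Finset.univ.filter (fun p : α × α => p.1 < p.2), (f p.1 p.2 + f p.2 p.1) := by
  classical
  have h0 : ∑ v, ∑ u, f v u = ∑ p ∈ (Finset.univ : Finset (α × α)), f p.1 p.2 := by
    rw [← Finset.univ_product_univ, Finset.sum_product]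
  rw [h0, ← Finset.sum_filter_add_sum_filter_not (Finset.univ : Finset (α × α))
    (fun p => p.1 < p.2)]
  have h1 : ∑ p ∈ Finset.univ.filter (fun p : α × α => ¬ p.1 < p.2), f p.1 p.2
      = ∑ p ∈ Finset.univ.filter (fun p : α × α => p.1 < p.2), f p.2 p.1 := by
    have h2 : Finset.univ.filter (fun p : α × α => ¬ p.1 < p.2)
        = Finset.univ.filter (fun p : α × α => p.2 < p.1)
          ∪ Finset.univ.filter (fun p : α × α => p.1 = p.2) := by
      ext p
      simp only [Finset.mem_union, Finset.mem_filter, Finset.mem_univ, true_and]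
      constructor
      · intro hp; rcases lt_trichotomy p.1 p.2 with h | h | h
        · exact absurd h hp
        · exact Or.inr h
        · exact Or.inl h
      · rintro (h | h)
        · exact not_lt.2 h.le
        · rw [h]; exact lt_irrefl _
    rw [h2, Finset.sum_union]
    · have h3 : ∑ p ∈ Finset.univ.filter (fun p : α × α => p.1 = p.2), f p.1 p.2 = 0 := by
        refine Finset.sum_eq_zero fun p hp => ?_
        simp only [Finset.mem_filter] at hp
        rw [hp.2]; exact hdiag p.2
      rw [h3, add_zero]
      refine Finset.sum_nbij' (fun p => Prod.swap p) (fun p => Prod.swap p) ?_ ?_ ?_ ?_ ?_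
      · intro p hp; simp only [Finset.mem_filter, Finset.mem_univ, true_and] at hp ⊢; exact hp
      · intro p hp; simp only [Finset.mem_filter, Finset.mem_univ, true_and] at hp ⊢; exact hp
      · intro p _; simp
      · intro p _; simp
      · intro p _; simp
    · rw [Finset.disjoint_left]
      intro p hp hq
      simp only [Finset.mem_filter, Finset.mem_univ, true_and] at hp hq
      exact absurd hq (ne_of_gt hp)
  rw [h1, ← Finset.sum_add_distrib]

/-- The per-edge contribution to the potential drop. -/
noncomputable def cterm {n : ℕ} (G : SimpleGraph (Fin n)) (w0 : Fin n → ℤ) (t : ℕ)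
    (u v : Fin n) : ℤ :=
  if G.Adj u v then
    -((diff G w0 (t + 1) u - diff G w0 (t + 1) v) *
      (Int.sign (diff G w0 (t + 1) u - diff G w0 (t + 1) v)
        + Int.sign (diff G w0 t u - diff G w0 t v)))
  else 0

lemma aux_pot_diff {n : ℕ} (G : SimpleGraph (Fin n)) (w0 : Fin n → ℤ) (t : ℕ) :
    pot G w0 (t + 1) - pot G w0 t
      = ∑ p ∈ Finset.univ.filter (fun p : Fin n × Fin n => p.1 < p.2), cterm G w0 t p.1 p.2 := by
  set w : ℕ → Fin n → ℤ := diff G w0 with hw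
  have hstep : ∀ s v, w (s + 1) v - w s v
      = ∑ u, (if G.Adj v u then Int.sign (w s u - w s v) else 0) := by
    intro s v; rw [hw, aux_diff_succ]; ring
  have key : pot G w0 (t + 1) - pot G w0 t
      = ∑ v, ∑ u, (if G.Adj v u then
          w (t+1) v * (Int.sign (w (t+1) u - w (t+1) v) + Int.sign (w t u - w t v)) else 0) := by
    unfold pot
    rw [← Finset.sum_sub_distrib]
    refine Finset.sum_congr rfl fun v _ => ?_
    have : w t v * w (t + 1) v = w (t+1) v * w t v := by ring
    have hexpand : w (t + 1) v * w (t + 1 + 1) v - w t v * w (t + 1) v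
        = w (t+1) v * ((w (t+2) v - w (t+1) v) + (w (t+1) v - w t v)) := by ring
    rw [hexpand, hstep (t+1) v, hstep t v, ← Finset.sum_add_distrib, Finset.mul_sum]
    refine Finset.sum_congr rfl fun u _ => ?_
    by_cases ha : G.Adj v u <;> simp [ha]
  rw [key, aux_sum_pairs _ (by intro a; simp [G.irrefl])]
  refine Finset.sum_congr rfl fun p hp => ?_
  rcases p with ⟨a, b⟩
  unfold cterm
  by_cases ha : G.Adj a b
  · have ha' : G.Adj b a := ha.symm
    simp only [ha, ha', if_true]
    have s1 : Int.sign (w (t+1) b - w (t+1) a) = - Int.sign (w (t+1) a - w (t+1) b) := by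
      rw [← Int.sign_neg]; ring_nf
    have s2 : Int.sign (w t b - w t a) = - Int.sign (w t a - w t b) := by
      rw [← Int.sign_neg]; ring_nf
    rw [s1, s2]; ring
  · have ha' : ¬ G.Adj b a := fun h => ha h.symm
    simp [ha, ha']

lemma aux_cterm_nonneg {n : ℕ} (G : SimpleGraph (Fin n)) (w0 : Fin n → ℤ) (t : ℕ)
    (u v : Fin n) : cterm G w0 t u v ≤ 0 := by
  unfold cterm
  by_cases ha : G.Adj u v
  · simp only [ha, if_true, neg_nonpos]
    set z := diff G w0 (t + 1) u - diff G w0 (t + 1) v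
    set x := diff G w0 t u - diff G w0 t v
    have hx : -1 ≤ x.sign ∧ x.sign ≤ 1 := by
      rcases lt_trichotomy x 0 with h | h | h <;>
        simp [Int.sign_eq_neg_one_iff_neg.2, Int.sign_eq_one_iff_pos.2, h]
    rcases lt_trichotomy z 0 with h | h | h
    · rw [Int.sign_eq_neg_one_iff_neg.2 h]
      have : z.sign + x.sign ≤ 0 := by rw [Int.sign_eq_neg_one_iff_neg.2 h]; omega
      nlinarith
    · simp [h]
    · have : 0 ≤ z.sign + x.sign := by rw [Int.sign_eq_one_iff_pos.2 h]; omega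
      exact mul_nonneg h.le this
  · simp [ha]

lemma aux_cterm_eq_zero {n : ℕ} (G : SimpleGraph (Fin n)) (w0 : Fin n → ℤ) (T : ℕ)
    (hT : ∀ t : ℕ, T ≤ t → pot G w0 t = pot G w0 T) (t : ℕ) (ht : T ≤ t)
    (u v : Fin n) (huv : u < v) : cterm G w0 t u v = 0 := by
  have hsum : ∑ p ∈ Finset.univ.filter (fun p : Fin n × Fin n => p.1 < p.2),
      cterm G w0 t p.1 p.2 = 0 := by
    rw [← aux_pot_diff, hT t ht, hT (t + 1) (by omega), sub_self]
  have := (Finset.sum_eq_zero_iff_of_nonpos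
    (fun p _ => aux_cterm_nonneg G w0 t p.1 p.2)).1 hsum (u, v)
    (by simp [huv])
  exact this

/-- The key structural consequence: at times `≥ T`, either `y = 0` or `y = -x`. -/
lemma aux_key {n : ℕ} (G : SimpleGraph (Fin n)) (w0 : Fin n → ℤ) (T : ℕ)
    (hT : ∀ t : ℕ, T ≤ t → pot G w0 t = pot G w0 T) (t : ℕ) (ht : T ≤ t)
    (u v : Fin n) (huv : u < v) (ha : G.Adj u v) :
    ylab G w0 u v t = 0 ∨ ylab G w0 u v t = - xlab G w0 u v t := by
  have h0 := aux_cterm_eq_zero G w0 T hT t ht u v huv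
  unfold cterm at h0
  rw [if_pos ha] at h0
  set z := diff G w0 (t + 1) u - diff G w0 (t + 1) v with hz
  set x := diff G w0 t u - diff G w0 t v with hx
  have h1 : z * (z.sign + x.sign) = 0 := by omega
  unfold ylab xlab
  rw [if_pos ha, if_pos ha, ← hz, ← hx]
  rcases mul_eq_zero.1 h1 with h | h
  · left; simp [h]
  · right; omega

lemma aux_ylab_eq_xlab_succ {n : ℕ} (G : SimpleGraph (Fin n)) (w0 : Fin n → ℤ)
    (u v : Fin n) (t : ℕ) : ylab G w0 u v t = xlab G w0 u v (t + 1) := rfl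

theorem stmt11 {n : ℕ} (G : SimpleGraph (Fin n)) (w0 : Fin n → ℤ) (T : ℕ)
    (hT : ∀ t : ℕ, T ≤ t → pot G w0 t = pot G w0 T) :
    ∀ u v : Fin n, u < v → G.Adj u v → ∀ t : ℕ, T ≤ t →
      ((elabel G w0 u v t = ((1 : ℤ), (0 : ℤ)) ∨ elabel G w0 u v t = ((-1 : ℤ), (0 : ℤ)) ∨
          elabel G w0 u v t = ((0 : ℤ), (0 : ℤ))) →
        ∀ t' : ℕ, t + 1 ≤ t' → elabel G w0 u v t' = ((0 : ℤ), (0 : ℤ))) ∧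
      (elabel G w0 u v t = ((-1 : ℤ), (1 : ℤ)) →
        elabel G w0 u v (t + 1) = ((1 : ℤ), (-1 : ℤ)) ∨
          elabel G w0 u v (t + 1) = ((1 : ℤ), (0 : ℤ))) ∧
      (elabel G w0 u v t = ((1 : ℤ), (-1 : ℤ)) →
        elabel G w0 u v (t + 1) = ((-1 : ℤ), (1 : ℤ)) ∨
          elabel G w0 u v (t + 1) = ((-1 : ℤ), (0 : ℤ))) := by
  intro u v huv ha t ht
  have key : ∀ s, T ≤ s → ylab G w0 u v s = 0 ∨ ylab G w0 u v s = - xlab G w0 u v s :=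
    fun s hs => aux_key G w0 T hT s hs u v huv ha
  have hxy : ∀ s, ylab G w0 u v s = xlab G w0 u v (s + 1) := fun s => rfl
  refine ⟨?_, ?_, ?_⟩
  · intro hlab
    have hy0 : ylab G w0 u v t = 0 := by
      rcases hlab with h | h | h <;>
        · have := congrArg Prod.snd h; simpa [elabel] using this
    -- show by induction: for all k, label at t+1+k is (0,0)
    have hzero : ∀ k, xlab G w0 u v (t + 1 + k) = 0 ∧ ylab G w0 u v (t + 1 + k) = 0 := by
      intro k
      induction k with
      | zero =>
        have hx : xlab G w0 u v (t + 1) = 0 := by rw [← hxy]; exact hy0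
        have hy : ylab G w0 u v (t + 1) = 0 := by
          rcases key (t + 1) (by omega) with h | h
          · exact h
          · rw [h, hx, neg_zero]
        exact ⟨by simpa using hx, by simpa using hy⟩
      | succ k ih =>
        have hx : xlab G w0 u v (t + 1 + (k + 1)) = 0 := by
          have : t + 1 + (k + 1) = (t + 1 + k) + 1 := by ring
          rw [this, ← hxy]; exact ih.2
        have hy : ylab G w0 u v (t + 1 + (k + 1)) = 0 := by
          rcases key (t + 1 + (k + 1)) (by omega) with h | h
          · exact h
          · rw [h, hx, neg_zero]
        exact ⟨hx, hy⟩
    intro t' ht'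
    obtain ⟨k, hk⟩ : ∃ k, t' = t + 1 + k := ⟨t' - (t + 1), by omega⟩
    obtain ⟨hx, hy⟩ := hzero k
    rw [hk]
    simp [elabel, hx, hy]
  · intro hlab
    have hy1 : ylab G w0 u v t = 1 := by
      have := congrArg Prod.snd hlab; simpa [elabel] using this
    have hx1 : xlab G w0 u v (t + 1) = 1 := by rw [← hxy]; exact hy1
    rcases key (t + 1) (by omega) with h | h
    · right; simp [elabel, hx1, h]
    · left; rw [hx1] at h; simp [elabel, hx1, h]
  · intro hlab
    have hy1 : ylab G w0 u v t = -1 := by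
      have := congrArg Prod.snd hlab; simpa [elabel] using this
    have hx1 : xlab G w0 u v (t + 1) = -1 := by rw [← hxy]; exact hy1
    rcases key (t + 1) (by omega) with h | h
    · right; simp [elabel, hx1, h]
    · left; rw [hx1] at h; simp [elabel, hx1, h]
end

section
/- In diffusion on a finite graph, there exists a time T' such that for all t ≥ T', the label of every edge belongs to {(1,-1), (-1,1), (0,0)}. -/
open Finset Classical

lemma sign_cases' (d : ℤ) : d.sign = -1 ∨ d.sign = 0 ∨ d.sign = 1 := by
  rcases lt_trichotomy d 0 with h|h|h
  · exact Or.inl (Int.sign_eq_neg_one_iff_neg.2 h)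
  · subst h; simp
  · exact Or.inr (Or.inr (Int.sign_eq_one_iff_pos.2 h))

lemma diff_succ_s12 {n : ℕ} (G : SimpleGraph (Fin n)) (w0 : Fin n → ℤ) (t : ℕ) (v : Fin n) :
    diff G w0 (t+1) v
      = diff G w0 t v + ∑ u, (if G.Adj v u then (diff G w0 t u - diff G w0 t v).sign else 0) := by
  have h : diff G w0 (t+1) = diffStep G (diff G w0 t) := by
    unfold diff; rw [Function.iterate_succ_apply']
  rw [h]
  unfold diffStep
  set w := diff G w0 t with hw
  have h1 : ((Finset.univ.filter fun u => G.Adj v u ∧ w v < w u).card : ℤ)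
      - ((Finset.univ.filter fun u => G.Adj v u ∧ w u < w v).card : ℤ)
      = ∑ u, (if G.Adj v u then (w u - w v).sign else 0) := by
    rw [Finset.card_filter, Finset.card_filter]
    push_cast
    rw [← Finset.sum_sub_distrib]
    refine Finset.sum_congr rfl fun u _ => ?_
    by_cases hadj : G.Adj v u
    · simp only [hadj, true_and, if_true]
      rcases lt_trichotomy (w v) (w u) with h | h | h
      · rw [if_pos h, if_neg (by omega), Int.sign_eq_one_iff_pos.2 (by omega)]; ring
      · rw [if_neg (by omega), if_neg (by omega)]; simp [h]
      · rw [if_neg (by omega), if_pos h, Int.sign_eq_neg_one_iff_neg.2 (by omega)]; ring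
    · simp [hadj]
  rw [← h1]; ring

lemma pot_diff {n : ℕ} (G : SimpleGraph (Fin n)) (w0 : Fin n → ℤ) (t : ℕ) :
    2 * (pot G w0 (t+1) - pot G w0 t)
      = ∑ p : Fin n × Fin n, (diff G w0 (t+1) p.2 - diff G w0 (t+1) p.1) *
          (if G.Adj p.2 p.1 then (diff G w0 (t+1) p.1 - diff G w0 (t+1) p.2).sign
            + (diff G w0 t p.1 - diff G w0 t p.2).sign else 0) := by
  set a := diff G w0 t with ha
  set b := diff G w0 (t+1) with hb
  set c := diff G w0 (t+2) with hc
  set F : Fin n → Fin n → ℤ := fun u v =>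
    if G.Adj v u then (b u - b v).sign + (a u - a v).sign else 0 with hF
  have hcv : ∀ v, c v - a v = ∑ u, F u v := by
    intro v
    have h1 := diff_succ_s12 G w0 (t+1) v
    have h2 := diff_succ_s12 G w0 t v
    have : c v - a v = (∑ u, (if G.Adj v u then (b u - b v).sign else 0))
        + ∑ u, (if G.Adj v u then (a u - a v).sign else 0) := by
      rw [hc, hb, ha] at *
      have : t + 2 = (t+1) + 1 := rfl
      rw [this] at *
      omega
    rw [this, ← Finset.sum_add_distrib]
    refine Finset.sum_congr rfl fun u _ => ?_
    by_cases hadj : G.Adj v u <;> simp [hF, hadj]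
  have hS : pot G w0 (t+1) - pot G w0 t = ∑ v, ∑ u, b v * F u v := by
    have : pot G w0 (t+1) - pot G w0 t = ∑ v, b v * (c v - a v) := by
      unfold pot
      rw [← ha, ← hb, ← hc, ← Finset.sum_sub_distrib]
      refine Finset.sum_congr rfl fun v _ => ?_
      ring
    rw [this]
    refine Finset.sum_congr rfl fun v _ => ?_
    rw [hcv v, Finset.mul_sum]
  have hFanti : ∀ u v, F v u = - F u v := by
    intro u v
    by_cases hadj : G.Adj v u
    · rw [hF]
      simp only [hadj, hadj.symm, if_true]
      have h1 : (b v - b u) = -(b u - b v) := by ring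
      have h2 : (a v - a u) = -(a u - a v) := by ring
      rw [h1, h2, Int.sign_neg, Int.sign_neg]; ring
    · have hadj' : ¬ G.Adj u v := fun h => hadj h.symm
      simp [hF, hadj, hadj']
  have hS2 : pot G w0 (t+1) - pot G w0 t = ∑ v, ∑ u, (- (b u * F u v)) := by
    rw [hS]
    rw [Finset.sum_comm]
    refine Finset.sum_congr rfl fun u _ => Finset.sum_congr rfl fun v _ => ?_
    rw [hFanti v u]; ring
  rw [Fintype.sum_prod_type, Finset.sum_comm]
  have : ∀ v u : Fin n, (b v - b u) * F u v = b v * F u v + (- (b u * F u v)) := by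
    intro v u; ring
  calc 2 * (pot G w0 (t+1) - pot G w0 t)
      = (∑ v, ∑ u, b v * F u v) + ∑ v, ∑ u, (- (b u * F u v)) := by
        rw [← hS, ← hS2]; ring
    _ = ∑ v, ∑ u, (b v - b u) * F u v := by
        rw [← Finset.sum_add_distrib]
        refine Finset.sum_congr rfl fun v _ => ?_
        rw [← Finset.sum_add_distrib]
        exact Finset.sum_congr rfl fun u _ => (this v u).symm
    _ = _ := by
        refine Finset.sum_congr rfl fun v _ => Finset.sum_congr rfl fun u _ => rfl

lemma term_nonpos' (d x : ℤ) (hx : x = -1 ∨ x = 0 ∨ x = 1) :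
    (-d) * (d.sign + x) ≤ 0 := by
  have h1 : d * Int.sign d = |d| := by
    rw [Int.mul_sign_self, Int.abs_eq_natAbs]
  rcases hx with rfl|rfl|rfl <;> nlinarith [le_abs_self d, neg_abs_le d]

lemma pot_term_nonpos {n : ℕ} (G : SimpleGraph (Fin n)) (w0 : Fin n → ℤ) (t : ℕ)
    (p : Fin n × Fin n) :
    (diff G w0 (t+1) p.2 - diff G w0 (t+1) p.1) *
          (if G.Adj p.2 p.1 then (diff G w0 (t+1) p.1 - diff G w0 (t+1) p.2).sign
            + (diff G w0 t p.1 - diff G w0 t p.2).sign else 0) ≤ 0 := by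
  by_cases hadj : G.Adj p.2 p.1
  · rw [if_pos hadj]
    have h : diff G w0 (t+1) p.2 - diff G w0 (t+1) p.1
        = -(diff G w0 (t+1) p.1 - diff G w0 (t+1) p.2) := by ring
    rw [h]
    exact term_nonpos' _ _ (sign_cases' _)
  · rw [if_neg hadj, mul_zero]

lemma pot_antitone {n : ℕ} (G : SimpleGraph (Fin n)) (w0 : Fin n → ℤ) :
    Antitone (pot G w0) := by
  refine antitone_nat_of_succ_le fun t => ?_
  have h := pot_diff G w0 t
  have h2 : (∑ p : Fin n × Fin n, (diff G w0 (t+1) p.2 - diff G w0 (t+1) p.1) *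
          (if G.Adj p.2 p.1 then (diff G w0 (t+1) p.1 - diff G w0 (t+1) p.2).sign
            + (diff G w0 t p.1 - diff G w0 t p.2).sign else 0)) ≤ 0 :=
    Finset.sum_nonpos fun p _ => pot_term_nonpos G w0 t p
  omega

lemma eq_zero_term {n : ℕ} (G : SimpleGraph (Fin n)) (w0 : Fin n → ℤ) (t : ℕ)
    (h : pot G w0 (t+1) = pot G w0 t) (u v : Fin n) (hadj : G.Adj u v)
    (hne : diff G w0 (t+1) u ≠ diff G w0 (t+1) v) :
    (diff G w0 t u - diff G w0 t v).sign = -(diff G w0 (t+1) u - diff G w0 (t+1) v).sign := by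
  have hsum := pot_diff G w0 t
  rw [h, sub_self, mul_zero] at hsum
  have hzero := (Finset.sum_eq_zero_iff_of_nonpos
      (fun p _ => pot_term_nonpos G w0 t p)).1 hsum.symm (u, v) (Finset.mem_univ _)
  simp only at hzero
  rw [if_pos hadj.symm] at hzero
  rcases mul_eq_zero.1 hzero with h1 | h2
  · exact absurd (by omega : diff G w0 (t+1) u = diff G w0 (t+1) v) hne
  · omega

lemma abs_step_le {n : ℕ} (G : SimpleGraph (Fin n)) (w0 : Fin n → ℤ) (t : ℕ) (v : Fin n) :
    |diff G w0 (t+1) v - diff G w0 t v| ≤ n := by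
  have h := diff_succ_s12 G w0 t v
  have h2 : diff G w0 (t+1) v - diff G w0 t v
      = ∑ u, (if G.Adj v u then (diff G w0 t u - diff G w0 t v).sign else 0) := by omega
  rw [h2]
  calc |∑ u, (if G.Adj v u then (diff G w0 t u - diff G w0 t v).sign else 0)|
      ≤ ∑ u, |(if G.Adj v u then (diff G w0 t u - diff G w0 t v).sign else 0)| :=
        Finset.abs_sum_le_sum_abs _ _
    _ ≤ ∑ _u : Fin n, (1:ℤ) := by
        refine Finset.sum_le_sum fun u _ => ?_
        by_cases hadj : G.Adj v u
        · rw [if_pos hadj]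
          rcases sign_cases' (diff G w0 t u - diff G w0 t v) with h|h|h <;> rw [h] <;> norm_num
        · rw [if_neg hadj]; norm_num
    _ = n := by simp

lemma pot_lower {n : ℕ} (G : SimpleGraph (Fin n)) (w0 : Fin n → ℤ) (t : ℕ) :
    -(n:ℤ)^3 ≤ pot G w0 t := by
  have key : ∀ v, -(n:ℤ)^2 ≤ diff G w0 t v * diff G w0 (t+1) v := by
    intro v
    have h := abs_step_le G w0 t v
    rcases abs_le.1 h with ⟨h1, h2⟩
    set a := diff G w0 t v
    set b := diff G w0 (t+1) v
    nlinarith [sq_nonneg (a + b), sq_nonneg (a - b), sq_nonneg (b - a - n), sq_nonneg (b - a + n)]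
  calc -(n:ℤ)^3 = ∑ _v : Fin n, (-(n:ℤ)^2) := by
        simp [Finset.sum_const]; ring
    _ ≤ pot G w0 t := Finset.sum_le_sum fun v _ => key v

lemma pot_eventually_const {n : ℕ} (G : SimpleGraph (Fin n)) (w0 : Fin n → ℤ) :
    ∃ T : ℕ, ∀ t, T ≤ t → pot G w0 (t+1) = pot G w0 t := by
  by_contra hcon
  push_neg at hcon
  have step : ∀ k : ℕ, ∃ t, pot G w0 t ≤ pot G w0 0 - k := by
    intro k
    induction k with
    | zero => exact ⟨0, by simp⟩
    | succ k ih =>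
      obtain ⟨t, ht⟩ := ih
      obtain ⟨s, hs, hne⟩ := hcon t
      have h1 : pot G w0 (s+1) ≤ pot G w0 s := pot_antitone G w0 (Nat.le_succ s)
      have h2 : pot G w0 s ≤ pot G w0 t := pot_antitone G w0 hs
      have h3 : pot G w0 (s+1) ≤ pot G w0 s - 1 := by omega
      exact ⟨s+1, by push_cast; omega⟩
  obtain ⟨t, ht⟩ := step (pot G w0 0 + (n:ℤ)^3 + 1).toNat
  have h1 := pot_lower G w0 t
  have h2 := Int.self_le_toNat (pot G w0 0 + (n:ℤ)^3 + 1)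
  omega

lemma persist_step {n : ℕ} (G : SimpleGraph (Fin n)) (w0 : Fin n → ℤ) (t : ℕ)
    (h : pot G w0 (t+1) = pot G w0 t) (u v : Fin n) (hadj : G.Adj u v)
    (heq : diff G w0 t u = diff G w0 t v) :
    diff G w0 (t+1) u = diff G w0 (t+1) v := by
  by_contra hne
  have hk := eq_zero_term G w0 t h u v hadj hne
  have h1 : (diff G w0 t u - diff G w0 t v).sign = 0 := by
    rw [heq]; simp
  have h2 : diff G w0 (t+1) u - diff G w0 (t+1) v ≠ 0 := by omega
  have h3 : (diff G w0 (t+1) u - diff G w0 (t+1) v).sign ≠ 0 := by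
    intro hc
    exact h2 (Int.sign_eq_zero_iff_zero.1 hc)
  omega

theorem stmt12 {n : ℕ} (G : SimpleGraph (Fin n)) (w0 : Fin n → ℤ) :
    ∃ T' : ℕ, ∀ t : ℕ, T' ≤ t → ∀ u v : Fin n, u < v → G.Adj u v →
      elabel G w0 u v t = ((1 : ℤ), (-1 : ℤ)) ∨
        elabel G w0 u v t = ((-1 : ℤ), (1 : ℤ)) ∨
        elabel G w0 u v t = ((0 : ℤ), (0 : ℤ)) := by
  classical
  obtain ⟨T, hT⟩ := pot_eventually_const G w0
  -- persistence of equality from any time ≥ T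
  have persist : ∀ (u v : Fin n), G.Adj u v → ∀ t0, T ≤ t0 →
      diff G w0 t0 u = diff G w0 t0 v → ∀ t, t0 ≤ t → diff G w0 t u = diff G w0 t v := by
    intro u v hadj t0 ht0 heq t hle
    induction t, hle using Nat.le_induction with
    | base => exact heq
    | succ s hs ih => exact persist_step G w0 s (hT s (le_trans ht0 hs)) u v hadj ih
  -- good labels when the (t+1)-values differ
  have good : ∀ t, T ≤ t → ∀ u v : Fin n, G.Adj u v →
      diff G w0 (t+1) u ≠ diff G w0 (t+1) v →
      elabel G w0 u v t = ((1 : ℤ), (-1 : ℤ)) ∨ elabel G w0 u v t = ((-1 : ℤ), (1 : ℤ)) := by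
    intro t ht u v hadj hne
    have hk := eq_zero_term G w0 t (hT t ht) u v hadj hne
    have h2 : diff G w0 (t+1) u - diff G w0 (t+1) v ≠ 0 := by omega
    have h3 : (diff G w0 (t+1) u - diff G w0 (t+1) v).sign ≠ 0 := by
      intro hc; exact h2 (Int.sign_eq_zero_iff_zero.1 hc)
    unfold elabel xlab ylab
    rw [if_pos hadj, if_pos hadj, hk]
    rcases sign_cases' (diff G w0 (t+1) u - diff G w0 (t+1) v) with h|h|h
    · left; rw [h]; norm_num
    · exact absurd h h3
    · right; rw [h]
  -- zero labels
  have zerolab : ∀ t, ∀ u v : Fin n, diff G w0 t u = diff G w0 t v →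
      diff G w0 (t+1) u = diff G w0 (t+1) v → elabel G w0 u v t = ((0:ℤ), (0:ℤ)) := by
    intro t u v h1 h2
    unfold elabel xlab ylab
    rw [h1, h2]
    simp
  set bad : Fin n × Fin n → ℕ → Prop := fun p t =>
    T ≤ t ∧ diff G w0 (t+1) p.1 = diff G w0 (t+1) p.2 ∧ diff G w0 t p.1 ≠ diff G w0 t p.2
    with hbad
  set f : Fin n × Fin n → ℕ := fun p => if h : ∃ t, bad p t then Nat.find h + 1 else T with hf
  refine ⟨Finset.univ.sup f, fun t ht u v huv hadj => ?_⟩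
  have htp : f (u, v) ≤ t := le_trans (Finset.le_sup (Finset.mem_univ (u, v))) ht
  by_cases hex : ∃ s, bad (u, v) s
  · -- after the (unique) bad time, the values agree forever
    have hfind := Nat.find_spec hex
    set t1 := Nat.find hex with ht1
    rw [hf] at htp
    simp only [dif_pos hex] at htp
    obtain ⟨hT1, heq1, _⟩ := hfind
    have h1 : diff G w0 t u = diff G w0 t v :=
      persist u v hadj (t1+1) (le_trans hT1 (Nat.le_succ t1)) heq1 t htp
    have h2 : diff G w0 (t+1) u = diff G w0 (t+1) v :=
      persist u v hadj (t1+1) (le_trans hT1 (Nat.le_succ t1)) heq1 (t+1) (by omega)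
    exact Or.inr (Or.inr (zerolab t u v h1 h2))
  · rw [hf] at htp
    simp only [dif_neg hex] at htp
    by_cases hcase : diff G w0 (t+1) u = diff G w0 (t+1) v
    · have hnb : ¬ bad (u, v) t := fun hb => hex ⟨t, hb⟩
      simp only [hbad, not_and, not_not] at hnb
      have h1 : diff G w0 t u = diff G w0 t v := hnb htp hcase
      exact Or.inr (Or.inr (zerolab t u v h1 hcase))
    · rcases good t htp u v hadj hcase with h | h
      · exact Or.inl h
      · exact Or.inr (Or.inl h)
end

section
/- In diffusion on a graph, if at time t the label of every edge belongs to {(1,-1), (-1,1), (0,0)}, then w_v(t+2) = w_v(t) for every vertex v. -/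
open Finset Classical

theorem stmt13 {n : ℕ} (G : SimpleGraph (Fin n)) (w0 : Fin n → ℤ) (t : ℕ)
    (h : ∀ u v : Fin n, u < v → G.Adj u v →
      elabel G w0 u v t = ((1 : ℤ), (-1 : ℤ)) ∨
        elabel G w0 u v t = ((-1 : ℤ), (1 : ℤ)) ∨
        elabel G w0 u v t = ((0 : ℤ), (0 : ℤ))) :
    ∀ v : Fin n, diff G w0 (t + 2) v = diff G w0 t v := by
  -- sign flip on each edge
  have key : ∀ u v : Fin n, G.Adj u v →
      Int.sign (diff G w0 (t+1) u - diff G w0 (t+1) v)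
        = - Int.sign (diff G w0 t u - diff G w0 t v) := by
    have base : ∀ u v : Fin n, u < v → G.Adj u v →
        Int.sign (diff G w0 (t+1) u - diff G w0 (t+1) v)
          = - Int.sign (diff G w0 t u - diff G w0 t v) := by
      intro u v huv hadj
      rcases h u v huv hadj with h1 | h1 | h1 <;>
      · simp only [elabel, xlab, ylab, if_pos hadj, Prod.mk.injEq] at h1
        simp [h1.1, h1.2]
    intro u v hadj
    rcases lt_trichotomy u v with huv | huv | huv
    · exact base u v huv hadj
    · exact absurd huv (G.ne_of_adj hadj)
    · have := base v u huv hadj.symm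
      have e1 : diff G w0 (t+1) u - diff G w0 (t+1) v
          = -(diff G w0 (t+1) v - diff G w0 (t+1) u) := by ring
      have e2 : diff G w0 t u - diff G w0 t v
          = -(diff G w0 t v - diff G w0 t u) := by ring
      rw [e1, e2, Int.sign_neg, Int.sign_neg, this]
  -- convert to inequality swap
  have swap : ∀ u v : Fin n, G.Adj u v →
      (diff G w0 (t+1) v < diff G w0 (t+1) u ↔ diff G w0 t u < diff G w0 t v) := by
    intro u v hadj
    have := key u v hadj
    constructor
    · intro hlt
      have h1 : Int.sign (diff G w0 (t+1) u - diff G w0 (t+1) v) = 1 :=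
        Int.sign_eq_one_of_pos (by linarith)
      rw [h1] at this
      have h2 : Int.sign (diff G w0 t u - diff G w0 t v) = -1 := by linarith
      have := Int.sign_eq_neg_one_iff_neg.mp h2
      linarith
    · intro hlt
      have h2 : Int.sign (diff G w0 t u - diff G w0 t v) = -1 :=
        Int.sign_eq_neg_one_of_neg (by linarith)
      rw [h2] at this
      have := Int.sign_eq_one_iff_pos.mp this
      linarith
  intro v
  have step1 : diff G w0 (t + 1) = diffStep G (diff G w0 t) := by
    simp [diff, Function.iterate_succ_apply']
  have step2 : diff G w0 (t + 2) = diffStep G (diff G w0 (t+1)) := by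
    show (diffStep G)^[t+1+1] w0 = _
    simp [diff, Function.iterate_succ_apply']
  have hv : diff G w0 (t+1) v
      = diff G w0 t v + ((Finset.univ.filter fun u => G.Adj v u ∧ diff G w0 t v < diff G w0 t u).card : ℤ)
        - ((Finset.univ.filter fun u => G.Adj v u ∧ diff G w0 t u < diff G w0 t v).card : ℤ) := by
    rw [step1]; rfl
  rw [step2]
  simp only [diffStep]
  have hA : (Finset.univ.filter fun u => G.Adj v u ∧ diff G w0 (t+1) v < diff G w0 (t+1) u)
      = (Finset.univ.filter fun u => G.Adj v u ∧ diff G w0 t u < diff G w0 t v) := by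
    apply Finset.filter_congr
    intro u _
    constructor
    · rintro ⟨ha, hl⟩; exact ⟨ha, (swap u v ha.symm).mp hl⟩
    · rintro ⟨ha, hl⟩; exact ⟨ha, (swap u v ha.symm).mpr hl⟩
  have hB : (Finset.univ.filter fun u => G.Adj v u ∧ diff G w0 (t+1) u < diff G w0 (t+1) v)
      = (Finset.univ.filter fun u => G.Adj v u ∧ diff G w0 t v < diff G w0 t u) := by
    apply Finset.filter_congr
    intro u _
    constructor
    · rintro ⟨ha, hl⟩
      have := key u v ha.symm
      have h1 : Int.sign (diff G w0 (t+1) u - diff G w0 (t+1) v) = -1 :=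
        Int.sign_eq_neg_one_of_neg (by linarith)
      rw [h1] at this
      have h2 : Int.sign (diff G w0 t u - diff G w0 t v) = 1 := by linarith
      exact ⟨ha, by linarith [Int.sign_eq_one_iff_pos.mp h2]⟩
    · rintro ⟨ha, hl⟩
      have := key u v ha.symm
      have h2 : Int.sign (diff G w0 t u - diff G w0 t v) = 1 :=
        Int.sign_eq_one_of_pos (by linarith)
      rw [h2] at this
      exact ⟨ha, by linarith [Int.sign_eq_neg_one_iff_neg.mp this]⟩
  rw [hA, hB, hv]
  ring
end

section
/- Diffusion on any finite graph from any real-valued initial configuration is eventually periodic with period dividing 2. -/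
open Finset Classical

noncomputable def diffStepR {n : ℕ} (G : SimpleGraph (Fin n)) (w : Fin n → ℝ) : Fin n → ℝ :=
  fun v => w v + ((Finset.univ.filter fun u => G.Adj v u ∧ w v < w u).card : ℝ)
             - ((Finset.univ.filter fun u => G.Adj v u ∧ w u < w v).card : ℝ)

noncomputable def diffR {n : ℕ} (G : SimpleGraph (Fin n)) (w0 : Fin n → ℝ) (t : ℕ) : Fin n → ℝ :=
  (diffStepR G)^[t] w0

noncomputable def sg (x : ℝ) : ℝ := if 0 < x then 1 else if x < 0 then -1 else 0

lemma sg_neg (x : ℝ) : sg (-x) = - sg x := by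
  unfold sg; rcases lt_trichotomy x 0 with h|h|h <;> split_ifs <;> norm_num <;> linarith

lemma sg_zero : sg 0 = 0 := by simp [sg]

lemma sg_eq_zero_iff (x : ℝ) : sg x = 0 ↔ x = 0 := by
  unfold sg
  rcases lt_trichotomy x 0 with h|h|h
  · rw [if_neg (by linarith), if_pos h]
    constructor <;> intro h' <;> [norm_num at h'; linarith]
  · subst h; norm_num
  · rw [if_pos h]
    constructor <;> intro h' <;> [norm_num at h'; linarith]

lemma abs_sg_le (x : ℝ) : |sg x| ≤ 1 := by
  unfold sg; split_ifs <;> norm_num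

lemma mul_sg (x : ℝ) : x * sg x = |x| := by
  unfold sg
  rcases lt_trichotomy x 0 with h|h|h
  · rw [if_neg (by linarith), if_pos h, abs_of_neg h]; ring
  · subst h; simp
  · rw [if_pos h, abs_of_pos h]; ring

lemma diffStepR_eq {n : ℕ} (G : SimpleGraph (Fin n)) (w : Fin n → ℝ) (v : Fin n) :
    diffStepR G w v = w v + ∑ u ∈ G.neighborFinset v, sg (w u - w v) := by
  have h : ∀ u : Fin n, sg (w u - w v)
      = (if w v < w u then (1:ℝ) else 0) - (if w u < w v then (1:ℝ) else 0) := by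
    intro u
    unfold sg
    rcases lt_trichotomy (w v) (w u) with h|h|h
    · rw [if_pos (by linarith), if_pos h, if_neg (by linarith)]; norm_num
    · rw [if_neg (by simp [h]), if_neg (by simp [h]), if_neg (by simp [h]), if_neg (by simp [h])]
      norm_num
    · rw [if_neg (by linarith), if_pos (by linarith), if_neg (by linarith), if_pos h]; norm_num
  rw [diffStepR]
  simp only [h, Finset.sum_sub_distrib, Finset.sum_boole]
  rw [SimpleGraph.neighborFinset_eq_filter, Finset.filter_filter, Finset.filter_filter]
  ring_nf

variable {n : ℕ}

noncomputable def PS (G : SimpleGraph (Fin n)) (f : Fin n → Fin n → ℝ) : ℝ :=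
  ∑ v, ∑ u ∈ G.neighborFinset v, f v u

lemma PS_eq (G : SimpleGraph (Fin n)) (f : Fin n → Fin n → ℝ) :
    PS G f = ∑ v, ∑ u, if G.Adj v u then f v u else 0 := by
  unfold PS
  refine Finset.sum_congr rfl fun v _ => ?_
  rw [SimpleGraph.neighborFinset_eq_filter, Finset.sum_filter]

lemma PS_swap (G : SimpleGraph (Fin n)) (f : Fin n → Fin n → ℝ) :
    PS G f = PS G (fun v u => f u v) := by
  rw [PS_eq, PS_eq, Finset.sum_comm]
  refine Finset.sum_congr rfl fun v _ => Finset.sum_congr rfl fun u _ => ?_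
  simp [SimpleGraph.adj_comm]

lemma PS_nonneg (G : SimpleGraph (Fin n)) (f : Fin n → Fin n → ℝ)
    (h : ∀ v u, G.Adj v u → 0 ≤ f v u) : 0 ≤ PS G f := by
  refine Finset.sum_nonneg fun v _ => Finset.sum_nonneg fun u hu => ?_
  exact h v u ((SimpleGraph.mem_neighborFinset G v u).mp hu)

lemma PS_neg_sub (G : SimpleGraph (Fin n)) (f g : Fin n → Fin n → ℝ) :
    PS G (fun v u => - f v u - g v u) = - PS G f - PS G g := by
  unfold PS
  simp [Finset.sum_sub_distrib]

lemma two_sum_mul (G : SimpleGraph (Fin n)) (x w : Fin n → ℝ) :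
    2 * ∑ v, x v * (∑ u ∈ G.neighborFinset v, sg (w u - w v))
      = PS G (fun v u => (x v - x u) * sg (w u - w v)) := by
  have h1 : ∑ v, x v * (∑ u ∈ G.neighborFinset v, sg (w u - w v))
      = PS G (fun v u => x v * sg (w u - w v)) := by
    unfold PS
    exact Finset.sum_congr rfl fun v _ => Finset.mul_sum _ _ _
  have h2 : PS G (fun v u => x v * sg (w u - w v))
      = PS G (fun v u => - (x u * sg (w u - w v))) := by
    rw [PS_swap]
    refine Finset.sum_congr rfl fun v _ => Finset.sum_congr rfl fun u _ => ?_
    show x u * sg (w v - w u) = -(x u * sg (w u - w v))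
    have h : w v - w u = -(w u - w v) := by ring
    rw [h, sg_neg]; ring
  have h3 : PS G (fun v u => x v * sg (w u - w v)) + PS G (fun v u => - (x u * sg (w u - w v)))
      = PS G (fun v u => (x v - x u) * sg (w u - w v)) := by
    unfold PS
    rw [← Finset.sum_add_distrib]
    refine Finset.sum_congr rfl fun v _ => ?_
    rw [← Finset.sum_add_distrib]
    exact Finset.sum_congr rfl fun u _ => by ring
  calc 2 * ∑ v, x v * (∑ u ∈ G.neighborFinset v, sg (w u - w v))
      = PS G (fun v u => x v * sg (w u - w v)) + PS G (fun v u => x v * sg (w u - w v)) := by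
        rw [h1]; ring
    _ = PS G (fun v u => x v * sg (w u - w v)) + PS G (fun v u => - (x u * sg (w u - w v))) := by
        rw [← h2]
    _ = _ := h3

lemma term_nonneg (β γ : ℝ) : 0 ≤ β * (sg γ + sg β) := by
  have h1 := mul_sg β
  have h2 : |β * sg γ| ≤ |β| := by
    rw [abs_mul]
    calc |β| * |sg γ| ≤ |β| * 1 := by
          exact mul_le_mul_of_nonneg_left (abs_sg_le γ) (abs_nonneg β)
      _ = |β| := mul_one _
  have h3 := neg_abs_le (β * sg γ)
  nlinarith [abs_nonneg β]

lemma term_eq_zero (β γ : ℝ) (h : β * (sg γ + sg β) = 0) (hβ : sg β ≠ 0) : sg γ = - sg β := by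
  have hβ0 : β ≠ 0 := by
    intro h0; exact hβ (by rw [h0, sg_zero])
  have h1 := mul_sg β
  have habs : 0 < |β| := abs_pos.mpr hβ0
  have h4 : β * sg γ = -|β| := by nlinarith
  rcases lt_trichotomy β 0 with hb|hb|hb
  · have hsb : sg β = -1 := by unfold sg; rw [if_neg (by linarith), if_pos hb]
    have h5 : β * sg γ = β := by rw [h4, abs_of_neg hb]; ring
    have hg : sg γ = 1 := mul_left_cancel₀ hβ0 (by linarith : β * sg γ = β * 1)
    rw [hg, hsb]; norm_num
  · exact absurd hb hβ0
  · have hsb : sg β = 1 := by unfold sg; rw [if_pos hb]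
    have h5 : β * sg γ = -β := by rw [h4, abs_of_pos hb]
    have hg : sg γ = -1 := mul_left_cancel₀ hβ0 (by linarith : β * sg γ = β * (-1))
    rw [hg, hsb]


lemma PS_congr (G : SimpleGraph (Fin n)) (f g : Fin n → Fin n → ℝ)
    (h : ∀ v u, f v u = g v u) : PS G f = PS G g := by
  unfold PS
  exact Finset.sum_congr rfl fun v _ => Finset.sum_congr rfl fun u _ => h v u

lemma PS_neg (G : SimpleGraph (Fin n)) (f : Fin n → Fin n → ℝ) :
    PS G (fun v u => - f v u) = - PS G f := by
  unfold PS; simp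

lemma diffR_succ (G : SimpleGraph (Fin n)) (w0 : Fin n → ℝ) (t : ℕ) :
    diffR G w0 (t+1) = diffStepR G (diffR G w0 t) := Function.iterate_succ_apply' _ _ _

lemma diffR_step (G : SimpleGraph (Fin n)) (w0 : Fin n → ℝ) (t : ℕ) (v : Fin n) :
    diffR G w0 (t+1) v = diffR G w0 t v
      + ∑ u ∈ G.neighborFinset v, sg (diffR G w0 t u - diffR G w0 t v) := by
  rw [diffR_succ]; exact diffStepR_eq G _ v

noncomputable def Pt (G : SimpleGraph (Fin n)) (w0 : Fin n → ℝ) (t : ℕ) : ℝ :=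
  ∑ v, diffR G w0 t v * diffR G w0 (t+1) v

noncomputable def Qt (G : SimpleGraph (Fin n)) (w0 : Fin n → ℝ) (t : ℕ) : ℝ :=
  ∑ v, (diffR G w0 t v)^2

lemma Pdiff (G : SimpleGraph (Fin n)) (w0 : Fin n → ℝ) (t : ℕ) :
    2 * (Pt G w0 t - Pt G w0 (t+1))
      = PS G (fun v u => (diffR G w0 (t+1) u - diffR G w0 (t+1) v) *
          (sg (diffR G w0 t u - diffR G w0 t v)
            + sg (diffR G w0 (t+1) u - diffR G w0 (t+1) v))) := by
  set a := diffR G w0 t with ha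
  set b := diffR G w0 (t+1) with hbdef
  set c := diffR G w0 (t+1+1) with hcdef
  have hb : ∀ v, b v = a v + ∑ u ∈ G.neighborFinset v, sg (a u - a v) := fun v =>
    diffR_step G w0 t v
  have hc : ∀ v, c v = b v + ∑ u ∈ G.neighborFinset v, sg (b u - b v) := fun v =>
    diffR_step G w0 (t+1) v
  have e : Pt G w0 t - Pt G w0 (t+1)
      = -((∑ v, b v * ∑ u ∈ G.neighborFinset v, sg (a u - a v))
          + (∑ v, b v * ∑ u ∈ G.neighborFinset v, sg (b u - b v))) := by
    unfold Pt
    rw [← hcdef]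
    rw [← Finset.sum_sub_distrib, ← Finset.sum_add_distrib, ← Finset.sum_neg_distrib]
    refine Finset.sum_congr rfl fun v _ => ?_
    show a v * b v - b v * c v
      = -(b v * (∑ u ∈ G.neighborFinset v, sg (a u - a v))
          + b v * ∑ u ∈ G.neighborFinset v, sg (b u - b v))
    linear_combination (-(b v)) * (hb v) - (b v) * (hc v)
  have h1 := two_sum_mul G b a
  have h2 := two_sum_mul G b b
  calc 2 * (Pt G w0 t - Pt G w0 (t+1))
      = -(2 * ∑ v, b v * ∑ u ∈ G.neighborFinset v, sg (a u - a v))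
        - (2 * ∑ v, b v * ∑ u ∈ G.neighborFinset v, sg (b u - b v)) := by rw [e]; ring
    _ = - PS G (fun v u => (b v - b u) * sg (a u - a v))
        - PS G (fun v u => (b v - b u) * sg (b u - b v)) := by
        rw [h1, h2]
    _ = PS G (fun v u => - ((b v - b u) * sg (a u - a v)) - (b v - b u) * sg (b u - b v)) := by
        rw [PS_neg_sub]
    _ = _ := PS_congr G _ _ fun v u => by ring

lemma Pt_mono (G : SimpleGraph (Fin n)) (w0 : Fin n → ℝ) (t : ℕ) :
    Pt G w0 (t+1) ≤ Pt G w0 t := by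
  have h := Pdiff G w0 t
  have h0 : 0 ≤ PS G (fun v u => (diffR G w0 (t+1) u - diffR G w0 (t+1) v) *
          (sg (diffR G w0 t u - diffR G w0 t v)
            + sg (diffR G w0 (t+1) u - diffR G w0 (t+1) v))) :=
    PS_nonneg G _ fun v u _ => term_nonneg _ _
  linarith

lemma Pt_le (G : SimpleGraph (Fin n)) (w0 : Fin n → ℝ) {s t : ℕ} (h : s ≤ t) :
    Pt G w0 t ≤ Pt G w0 s := by
  induction t with
  | zero => simp_all
  | succ t ih =>
    rcases Nat.lt_or_ge s (t+1) with h'|h'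
    · exact le_trans (Pt_mono G w0 t) (ih (Nat.lt_succ_iff.mp h'))
    · have : s = t + 1 := le_antisymm h h'
      rw [this]

lemma Pt_eq_imp (G : SimpleGraph (Fin n)) (w0 : Fin n → ℝ) (t : ℕ)
    (h : Pt G w0 t = Pt G w0 (t+1)) :
    ∀ v u, u ∈ G.neighborFinset v →
      (diffR G w0 (t+1) u - diffR G w0 (t+1) v) *
          (sg (diffR G w0 t u - diffR G w0 t v)
            + sg (diffR G w0 (t+1) u - diffR G w0 (t+1) v)) = 0 := by
  have hd := Pdiff G w0 t
  rw [h, sub_self, mul_zero] at hd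
  have hd' := hd.symm
  unfold PS at hd'
  intro v u hu
  have h1 : ∀ v ∈ Finset.univ (α := Fin n),
      0 ≤ ∑ u ∈ G.neighborFinset v, (diffR G w0 (t+1) u - diffR G w0 (t+1) v) *
          (sg (diffR G w0 t u - diffR G w0 t v)
            + sg (diffR G w0 (t+1) u - diffR G w0 (t+1) v)) :=
    fun v _ => Finset.sum_nonneg fun u _ => term_nonneg _ _
  have h2 := (Finset.sum_eq_zero_iff_of_nonneg h1).mp hd' v (Finset.mem_univ v)
  exact (Finset.sum_eq_zero_iff_of_nonneg (fun u _ => term_nonneg _ _)).mp h2 u hu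

lemma Pt_Qt (G : SimpleGraph (Fin n)) (w0 : Fin n → ℝ) (t : ℕ) :
    2 * Pt G w0 t = 2 * Qt G w0 t
      - PS G (fun v u => |diffR G w0 t u - diffR G w0 t v|) := by
  set a := diffR G w0 t with ha
  have hb : ∀ v, diffR G w0 (t+1) v = a v + ∑ u ∈ G.neighborFinset v, sg (a u - a v) :=
    fun v => diffR_step G w0 t v
  have e : Pt G w0 t = Qt G w0 t + ∑ v, a v * ∑ u ∈ G.neighborFinset v, sg (a u - a v) := by
    unfold Pt Qt
    rw [← ha, ← Finset.sum_add_distrib]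
    refine Finset.sum_congr rfl fun v _ => ?_
    rw [hb v]; ring
  have h1 := two_sum_mul G a a
  have h2 : PS G (fun v u => (a v - a u) * sg (a u - a v))
      = PS G (fun v u => - |a u - a v|) := by
    refine PS_congr G _ _ fun v u => ?_
    have := mul_sg (a u - a v)
    nlinarith [this]
  rw [e]
  rw [mul_add]
  rw [h1, h2, PS_neg]
  ring
lemma Qt_nonneg (G : SimpleGraph (Fin n)) (w0 : Fin n → ℝ) (t : ℕ) : 0 ≤ Qt G w0 t :=
  Finset.sum_nonneg fun v _ => sq_nonneg _

lemma abs_le_sqrt_Qt (G : SimpleGraph (Fin n)) (w0 : Fin n → ℝ) (t : ℕ) (v : Fin n) :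
    |diffR G w0 t v| ≤ Real.sqrt (Qt G w0 t) := by
  rw [← Real.sqrt_sq_eq_abs]
  exact Real.sqrt_le_sqrt
    (Finset.single_le_sum (fun u (_ : u ∈ Finset.univ) => sq_nonneg (diffR G w0 t u))
      (Finset.mem_univ v))

lemma PS_abs_le (G : SimpleGraph (Fin n)) (w0 : Fin n → ℝ) (t : ℕ) :
    PS G (fun v u => |diffR G w0 t u - diffR G w0 t v|)
      ≤ (n:ℝ) * ((n:ℝ) * (2 * Real.sqrt (Qt G w0 t))) := by
  unfold PS
  have hbd : ∀ v u : Fin n, |diffR G w0 t u - diffR G w0 t v| ≤ 2 * Real.sqrt (Qt G w0 t) := by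
    intro v u
    have h1 := abs_le_sqrt_Qt G w0 t u
    have h2 := abs_le_sqrt_Qt G w0 t v
    have h3 : |diffR G w0 t u - diffR G w0 t v| ≤ |diffR G w0 t u| + |diffR G w0 t v| := by
      have := abs_add_le (diffR G w0 t u) (-(diffR G w0 t v))
      simpa [sub_eq_add_neg] using this
    linarith
  calc ∑ v, ∑ u ∈ G.neighborFinset v, |diffR G w0 t u - diffR G w0 t v|
      ≤ ∑ v : Fin n, (n:ℝ) * (2 * Real.sqrt (Qt G w0 t)) := by
        refine Finset.sum_le_sum fun v _ => ?_
        calc ∑ u ∈ G.neighborFinset v, |diffR G w0 t u - diffR G w0 t v|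
            ≤ ∑ u ∈ G.neighborFinset v, 2 * Real.sqrt (Qt G w0 t) :=
              Finset.sum_le_sum fun u _ => hbd v u
          _ = ((G.neighborFinset v).card : ℝ) * (2 * Real.sqrt (Qt G w0 t)) := by
              rw [Finset.sum_const, nsmul_eq_mul]
          _ ≤ (n:ℝ) * (2 * Real.sqrt (Qt G w0 t)) := by
              apply mul_le_mul_of_nonneg_right _ (by positivity)
              have h := Finset.card_le_univ (G.neighborFinset v)
              rw [Fintype.card_fin] at h
              exact_mod_cast h
    _ = (n:ℝ) * ((n:ℝ) * (2 * Real.sqrt (Qt G w0 t))) := by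
        rw [Finset.sum_const, Finset.card_univ, Fintype.card_fin, nsmul_eq_mul]

lemma diffR_bounded (G : SimpleGraph (Fin n)) (w0 : Fin n → ℝ) :
    ∃ C : ℝ, ∀ (t : ℕ) (v : Fin n), |diffR G w0 t v| ≤ C := by
  set K : ℝ := (n:ℝ)^2 with hK
  refine ⟨K + Real.sqrt (|Pt G w0 0| + K^2), fun t v => ?_⟩
  have hK0 : 0 ≤ K := by positivity
  set q := Qt G w0 t with hq'
  set x := Real.sqrt q with hx'
  have hq0 : 0 ≤ q := Qt_nonneg G w0 t
  have hx2 : x^2 = q := Real.sq_sqrt hq0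
  have hx0 : 0 ≤ x := Real.sqrt_nonneg _
  have hP := Pt_le G w0 (Nat.zero_le t)
  have hQP := Pt_Qt G w0 t
  have hPSnn := PS_nonneg G (fun v u => |diffR G w0 t u - diffR G w0 t v|)
    (fun v u _ => abs_nonneg _)
  have hPS := PS_abs_le G w0 t
  have hq : q ≤ |Pt G w0 0| + K*x := by
    have hKx : (n:ℝ) * ((n:ℝ) * (2 * x)) = 2*K*x := by rw [hK]; ring
    have habs : Pt G w0 0 ≤ |Pt G w0 0| := le_abs_self _
    rw [← hx'] at hPS
    linarith
  have hs0 : 0 ≤ |Pt G w0 0| + K^2 := by positivity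
  set s := Real.sqrt (|Pt G w0 0| + K^2) with hs'
  have hs2 : s^2 = |Pt G w0 0| + K^2 := Real.sq_sqrt hs0
  have hsnn : 0 ≤ s := Real.sqrt_nonneg _
  have hxK : x ≤ K + s := by
    by_contra hcon
    push_neg at hcon
    have h1 : 0 < x - s - K := by linarith
    have h2 : 0 < x + s := by linarith
    nlinarith [mul_pos h1 h2]
  calc |diffR G w0 t v| ≤ x := abs_le_sqrt_Qt G w0 t v
    _ ≤ K + s := hxK

noncomputable def sgz (x : ℝ) : ℤ := if 0 < x then 1 else if x < 0 then -1 else 0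

lemma sgz_cast (x : ℝ) : ((sgz x : ℤ) : ℝ) = sg x := by
  unfold sg sgz; split_ifs <;> norm_num

lemma diffR_int (G : SimpleGraph (Fin n)) (w0 : Fin n → ℝ) :
    ∀ (t : ℕ) (v : Fin n), ∃ k : ℤ, diffR G w0 t v = w0 v + k := by
  intro t
  induction t with
  | zero => intro v; exact ⟨0, by simp [diffR]⟩
  | succ t ih =>
    intro v
    obtain ⟨k, hk⟩ := ih v
    refine ⟨k + ∑ u ∈ G.neighborFinset v, sgz (diffR G w0 t u - diffR G w0 t v), ?_⟩
    rw [diffR_step, hk]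
    push_cast
    simp only [sgz_cast]
    ring

lemma exists_repeat (G : SimpleGraph (Fin n)) (w0 : Fin n → ℝ) :
    ∃ t1 t2 : ℕ, t1 < t2 ∧ diffR G w0 t1 = diffR G w0 t2 := by
  obtain ⟨C, hC⟩ := diffR_bounded G w0
  set S : Set (Fin n → ℝ) :=
    Set.univ.pi (fun v => {x : ℝ | ∃ k : ℤ, x = w0 v + k ∧ |x| ≤ C}) with hS
  have hfin : S.Finite := by
    apply Set.Finite.pi
    intro v
    have hsub : {x : ℝ | ∃ k : ℤ, x = w0 v + k ∧ |x| ≤ C}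
        ⊆ (fun k : ℤ => w0 v + k) '' (Set.Icc (-(⌈C + |w0 v|⌉)) ⌈C + |w0 v|⌉) := by
      rintro x ⟨k, rfl, hx⟩
      refine ⟨k, ?_, rfl⟩
      have hk : |(k:ℝ)| ≤ C + |w0 v| := by
        have h1 : (k:ℝ) = (w0 v + k) - w0 v := by ring
        rw [h1]
        have := abs_add_le (w0 v + (k:ℝ)) (-(w0 v))
        rw [abs_neg] at this
        calc |(w0 v + (k:ℝ)) - w0 v| ≤ |w0 v + (k:ℝ)| + |w0 v| := by
              simpa [sub_eq_add_neg] using this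
          _ ≤ C + |w0 v| := by linarith
      have hceil : ((k:ℝ)) ≤ (⌈C + |w0 v|⌉ : ℝ) :=
        le_trans (le_abs_self _) (le_trans hk (Int.le_ceil _))
      have hceil2 : -((⌈C + |w0 v|⌉ : ℝ)) ≤ (k:ℝ) := by
        have := neg_abs_le (k:ℝ)
        have h2 : -(C + |w0 v|) ≤ (k:ℝ) := by linarith
        have h3 := Int.le_ceil (C + |w0 v|)
        linarith
      constructor
      · exact_mod_cast hceil2
      · exact_mod_cast hceil
    exact Set.Finite.subset ((Set.finite_Icc _ _).image _) hsub
  have hmap : Set.MapsTo (fun t => diffR G w0 t) Set.univ S := by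
    intro t _
    rw [hS, Set.mem_univ_pi]
    intro v
    obtain ⟨k, hk⟩ := diffR_int G w0 t v
    exact ⟨k, hk, hC t v⟩
  obtain ⟨t1, -, t2, -, hne, heq⟩ :=
    Set.infinite_univ.exists_ne_map_eq_of_mapsTo hmap hfin
  rcases hne.lt_or_gt with h|h
  exacts [⟨t1, t2, h, heq⟩, ⟨t2, t1, h, heq.symm⟩]
theorem stmt15 {n : ℕ} (G : SimpleGraph (Fin n)) (w0 : Fin n → ℝ) :
    ∃ T : ℕ, ∀ t : ℕ, T ≤ t → diffR G w0 (t + 2) = diffR G w0 t := by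
  obtain ⟨t1, t2, hlt, heq⟩ := exists_repeat G w0
  set p := t2 - t1 with hp
  have hp1 : 1 ≤ p := by omega
  have hper : ∀ t, t1 ≤ t → diffR G w0 (t + p) = diffR G w0 t := by
    intro t ht
    have e1 : diffR G w0 (t + p) = (diffStepR G)^[t - t1] (diffR G w0 t2) := by
      rw [show t + p = (t - t1) + t2 by omega]
      exact Function.iterate_add_apply _ _ _ _
    have e2 : diffR G w0 t = (diffStepR G)^[t - t1] (diffR G w0 t1) := by
      conv_lhs => rw [show t = (t - t1) + t1 by omega]
      exact Function.iterate_add_apply _ _ _ _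
    rw [e1, ← heq, ← e2]
  have hPper : ∀ t, t1 ≤ t → Pt G w0 (t + p) = Pt G w0 t := by
    intro t ht
    unfold Pt
    rw [hper t ht, show t + p + 1 = (t+1) + p by omega, hper (t+1) (by omega)]
  have hPconst : ∀ t, t1 ≤ t → Pt G w0 t = Pt G w0 t1 := by
    intro t ht
    have hub : Pt G w0 t ≤ Pt G w0 t1 := Pt_le G w0 ht
    have hcyc : ∀ k : ℕ, Pt G w0 (t1 + k*p) = Pt G w0 t1 := by
      intro k
      induction k with
      | zero => simp
      | succ k ih =>
        rw [show t1 + (k+1)*p = (t1 + k*p) + p by ring]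
        rw [hPper _ (by omega), ih]
    have hge : t ≤ t1 + t*p := by
      have h := Nat.mul_le_mul_left t hp1
      omega
    have hlb : Pt G w0 (t1 + t*p) ≤ Pt G w0 t := Pt_le G w0 hge
    rw [hcyc t] at hlb
    linarith
  have hPstep : ∀ t, t1 ≤ t → Pt G w0 t = Pt G w0 (t+1) := fun t ht => by
    rw [hPconst t ht, hPconst (t+1) (by omega)]
  have hsign : ∀ t, t1 ≤ t → ∀ v u, u ∈ G.neighborFinset v →
      sg (diffR G w0 (t+1) u - diffR G w0 (t+1) v) ≠ 0 →
      sg (diffR G w0 t u - diffR G w0 t v)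
        = - sg (diffR G w0 (t+1) u - diffR G w0 (t+1) v) := by
    intro t ht v u hu hne
    exact term_eq_zero _ _ (Pt_eq_imp G w0 t (hPstep t ht) v u hu) hne
  have hzero : ∀ t, t1 ≤ t → ∀ v u, u ∈ G.neighborFinset v →
      sg (diffR G w0 t u - diffR G w0 t v) = 0 →
      sg (diffR G w0 (t+1) u - diffR G w0 (t+1) v) = 0 := by
    intro t ht v u hu h0
    by_contra hne
    have h := hsign t ht v u hu hne
    rw [h0] at h
    exact hne (by linarith)
  have hzeroj : ∀ t, t1 ≤ t → ∀ v u, u ∈ G.neighborFinset v →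
      sg (diffR G w0 t u - diffR G w0 t v) = 0 →
      ∀ j, sg (diffR G w0 (t+j) u - diffR G w0 (t+j) v) = 0 := by
    intro t ht v u hu h0 j
    induction j with
    | zero => exact h0
    | succ j ih =>
      rw [show t + (j+1) = (t+j)+1 by omega]
      exact hzero (t+j) (by omega) v u hu ih
  have hmain : ∀ t, t1 ≤ t → ∀ v u, u ∈ G.neighborFinset v →
      sg (diffR G w0 (t+1) u - diffR G w0 (t+1) v)
        = - sg (diffR G w0 t u - diffR G w0 t v) := by
    intro t ht v u hu
    by_cases h : sg (diffR G w0 (t+1) u - diffR G w0 (t+1) v) = 0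
    · have h0 : sg (diffR G w0 t u - diffR G w0 t v) = 0 := by
        by_contra hne
        have hj := hzeroj (t+1) (by omega) v u hu h (p-1)
        rw [show (t+1) + (p-1) = t + p by omega, hper t ht] at hj
        exact hne hj
      rw [h, h0, neg_zero]
    · have h' := hsign t ht v u hu h
      linarith
  refine ⟨t1, fun t ht => ?_⟩
  funext v
  have e2 : diffR G w0 (t+2) v = diffR G w0 (t+1) v
      + ∑ u ∈ G.neighborFinset v, sg (diffR G w0 (t+1) u - diffR G w0 (t+1) v) :=
    diffR_step G w0 (t+1) v
  have e1 : diffR G w0 (t+1) v = diffR G w0 t v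
      + ∑ u ∈ G.neighborFinset v, sg (diffR G w0 t u - diffR G w0 t v) :=
    diffR_step G w0 t v
  have hsum : ∑ u ∈ G.neighborFinset v, sg (diffR G w0 t u - diffR G w0 t v)
      + ∑ u ∈ G.neighborFinset v, sg (diffR G w0 (t+1) u - diffR G w0 (t+1) v) = 0 := by
    rw [← Finset.sum_add_distrib]
    apply Finset.sum_eq_zero
    intro u hu
    have h := hmain t ht v u hu
    linarith
  linarith [e1, e2, hsum]
end
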